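/- Let L ↠ L' be an epimorphism of finitely generated groups, and let H' be a group through which the epimorphism factors (L ↠ H' ↠ L') maximizing Scott complexity. Then the Scott complexity satisfies scott(H') ≥ scott(L'), i.e., (q_{H'} − 1, p_{H'}) ≥ (q_{L'} − 1, p_{L'}) lexicographically in the first coordinate and with the stated orders; moreover if some freely indecomposable free factor of H' has trivial image in L' then the inequality is strict. -/

import Mathlib

/-- A group is freely indecomposable if in any free product decomposition one
of the factors is trivial. -/
def FreelyIndecomposable (G : Type) [Group G] : Prop :=
  ∀ (A B : Type) (_ : Group A) (_ : Group B),
    Nonempty (G ≃* Monoid.Coprod A B) → Subsingleton A ∨ Subsingleton B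

/-- `HasScott G a p` : `G` has a Grushko decomposition
`G ≅ G₁ * ⋯ * G_p * F_q` with each `Gᵢ` nontrivial, freely indecomposable and
not infinite cyclic, and with `a = q - 1`; the Scott complexity of `G` is then
the pair `(q - 1, p)`. -/
def HasScott (G : Type) [Group G] (a : ℤ) (p : ℕ) : Prop :=
  ∃ (q : ℕ) (H : Fin p → Type) (_ : ∀ i, Group (H i)),
    a = (q : ℤ) - 1 ∧
    (∀ i, Nontrivial (H i)) ∧
    (∀ i, FreelyIndecomposable (H i)) ∧
    (∀ i, IsEmpty (H i ≃* Multiplicative ℤ)) ∧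
    Nonempty (G ≃* Monoid.Coprod (Monoid.CoprodI H) (FreeGroup (Fin q)))

/-- The order on Scott complexities: lexicographic on `(q - 1, p)`. -/
def ScottLE (x y : ℤ × ℕ) : Prop :=
  x.1 < y.1 ∨ (x.1 = y.1 ∧ x.2 ≤ y.2)

/-- Strict order on Scott complexities. -/
def ScottLT (x y : ℤ × ℕ) : Prop := ScottLE x y ∧ x ≠ y

namespace ScottAux

open Monoid Function

theorem map_surjective {M N M' N' : Type*} [Group M] [Group N] [Group M'] [Group N']
    (f : M →* M') (g : N →* N') (hf : Surjective f) (hg : Surjective g) :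
    Surjective (Coprod.map f g) := fun y =>
  Coprod.induction_on (motive := fun y => ∃ x, Coprod.map f g x = y) y
    (fun m => let ⟨x, hx⟩ := hf m; ⟨Coprod.inl x, by simp [hx]⟩)
    (fun n => let ⟨x, hx⟩ := hg n; ⟨Coprod.inr x, by simp [hx]⟩)
    (fun x y ⟨u, hu⟩ ⟨v, hv⟩ => ⟨u * v, by simp [hu, hv]⟩)

/-- `ℤ * F q ≃ F (q+1)`. -/
noncomputable def zEquiv (q : ℕ) :
    Coprod (Multiplicative ℤ) (FreeGroup (Fin q)) ≃* FreeGroup (Fin (q + 1)) :=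
  MonoidHom.toMulEquiv
    (Coprod.lift (zpowersHom _ (FreeGroup.of (0 : Fin (q + 1))))
      (FreeGroup.lift fun j => FreeGroup.of j.succ))
    (FreeGroup.lift fun i =>
      Fin.cases (Coprod.inl (Multiplicative.ofAdd 1)) (fun j => Coprod.inr (FreeGroup.of j)) i)
    (by
      apply Coprod.hom_ext
      · apply MonoidHom.ext_mint
        simp
      · apply FreeGroup.ext_hom
        intro i
        simp)
    (by
      apply FreeGroup.ext_hom
      intro i
      induction i using Fin.cases with
      | zero => simp
      | succ j => simp)

/-- `Fin.cons` as a family of types. -/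
def consT {b : ℕ} (A : Type) (H : Fin b → Type) : Fin (b + 1) → Type := Fin.cons A H

instance consGroup {b : ℕ} {A : Type} {H : Fin b → Type} [gA : Group A]
    [instH : ∀ i, Group (H i)] (i : Fin (b + 1)) : Group (consT A H i) :=
  Fin.cases (motive := fun i => Group (consT A H i)) gA instH i

/-- `A * (H₁ * ⋯ * H_b) ≃ (A * H₁ * ⋯ * H_b)`. -/
noncomputable def consEquiv {b : ℕ} (A : Type) (H : Fin b → Type) [Group A]
    [∀ i, Group (H i)] :
    Coprod A (Monoid.CoprodI H) ≃* Monoid.CoprodI (consT A H) :=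
  MonoidHom.toMulEquiv
    (Coprod.lift (Monoid.CoprodI.of (M := consT A H) (i := 0))
      (Monoid.CoprodI.lift fun j => Monoid.CoprodI.of (M := consT A H) (i := j.succ)))
    (Monoid.CoprodI.lift fun i =>
      Fin.cases (motive := fun i => consT A H i →* Coprod A (Monoid.CoprodI H))
        Coprod.inl (fun j =>
          (Coprod.inr.comp (Monoid.CoprodI.of (M := H) (i := j)) :
            consT A H j.succ →* Coprod A (Monoid.CoprodI H))) i)
    (by
      apply Coprod.hom_ext
      · ext x
        simp only [MonoidHom.comp_apply, MonoidHom.id_apply, Coprod.lift_apply_inl]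
        exact Monoid.CoprodI.lift_of (M := consT A H) (i := 0) _ x
      · apply Monoid.CoprodI.ext_hom
        intro j
        ext x
        simp only [MonoidHom.comp_apply, MonoidHom.id_apply, Coprod.lift_apply_inr,
          Monoid.CoprodI.lift_of]
        exact Monoid.CoprodI.lift_of (M := consT A H) (i := j.succ) _ x)
    (by
      apply Monoid.CoprodI.ext_hom
      intro i
      induction i using Fin.cases with
      | zero =>
          ext x
          simp only [MonoidHom.comp_apply, MonoidHom.id_apply, Monoid.CoprodI.lift_of]
          exact Coprod.lift_apply_inl _ _ x
      | succ j =>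
          ext x
          simp only [MonoidHom.comp_apply, MonoidHom.id_apply, Monoid.CoprodI.lift_of,
            Fin.cases_succ, Coprod.lift_apply_inr]
          exact (Coprod.lift_apply_inr _ _ _).trans (Monoid.CoprodI.lift_of (M := H) (i := j)
            (fun j => Monoid.CoprodI.of (M := consT A H) (i := j.succ)) x))

end ScottAux

open Monoid Function ScottAux in
/-- Let `φ : L ↠ L'` be an epimorphism of finitely generated groups and let
`H'` be an intermediate quotient (`L ↠ H' ↠ L'`) of maximal Scott complexity.
Then `scott(H') ≥ scott(L')`, and if some nontrivial freely indecomposable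
free factor of `H'` has trivial image in `L'` then the inequality is strict. -/
theorem scott_of_maximal_intermediate_quotient
    (L L' H' : Type) [Group L] [Group L'] [Group H']
    [Group.FG L] [Group.FG L'] [Group.FG H']
    (φ : L →* L') (hφ : Function.Surjective φ)
    (α : L →* H') (β : H' →* L')
    (hα : Function.Surjective α) (hβ : Function.Surjective β)
    (hcomp : β.comp α = φ)
    (hmax : ∀ (H'' : Type) (_ : Group H'') (α' : L →* H'') (β' : H'' →* L'),
      Function.Surjective α' → Function.Surjective β' → β'.comp α' = φ →
      ∀ a b a' b', HasScott H'' a b → HasScott H' a' b' →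
        ScottLE (a, b) (a', b')) :
    (∀ a b a' b', HasScott L' a b → HasScott H' a' b' →
      ScottLE (a, b) (a', b')) ∧
    ((∃ (A B : Type) (_ : Group A) (_ : Group B)
        (e : H' ≃* Monoid.Coprod A B),
        Nontrivial A ∧ FreelyIndecomposable A ∧
        (∀ x : A, β (e.symm (Monoid.Coprod.inl x)) = 1)) →
      ∀ a b a' b', HasScott L' a b → HasScott H' a' b' →
        ScottLT (a, b) (a', b')) := by
  have part1 : ∀ a b a' b', HasScott L' a b → HasScott H' a' b' →
      ScottLE (a, b) (a', b') := fun a b a' b' h1 h2 =>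
    hmax L' ‹_› φ (MonoidHom.id L') hφ Function.surjective_id (MonoidHom.id_comp φ)
      a b a' b' h1 h2
  refine ⟨part1, ?_⟩
  rintro ⟨A, B, gA, gB, e, hAnt, hAfi, hkill⟩ a b a' b' h1 h2
  refine ⟨part1 a b a' b' h1 h2, ?_⟩
  intro heq
  have ha' : a = a' := congrArg Prod.fst heq
  have hb' : b = b' := congrArg Prod.snd heq
  subst ha' hb'
  -- the map `B →* L'`
  set βB : B →* L' := β.comp (e.symm.toMonoidHom.comp Coprod.inr) with hβB_def
  have key : β.comp e.symm.toMonoidHom = Coprod.lift 1 βB := by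
    apply Coprod.hom_ext
    · ext x
      simpa using hkill x
    · rfl
  have hβB : Surjective βB := by
    intro y
    obtain ⟨h, rfl⟩ := hβ y
    have h1' : β h = Coprod.lift 1 βB (e h) := by
      conv_lhs => rw [← e.symm_apply_apply h]
      exact DFunLike.congr_fun key (e h)
    have hrange : (Coprod.lift (1 : A →* L') βB).range = βB.range := by
      rw [Coprod.range_lift]; simp
    have : Coprod.lift (1 : A →* L') βB (e h) ∈ βB.range := by
      rw [← hrange]; exact ⟨e h, rfl⟩
    obtain ⟨x, hx⟩ := this
    exact ⟨x, by rw [hx, ← h1']⟩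
  -- the intermediate quotient `A * L'`
  set α'' : L →* Coprod A L' :=
    (Coprod.map (MonoidHom.id A) βB).comp (e.toMonoidHom.comp α) with hα''_def
  have hα'' : Surjective α'' :=
    (map_surjective _ _ Function.surjective_id hβB).comp (e.surjective.comp hα)
  set β'' : Coprod A L' →* L' := Coprod.lift 1 (MonoidHom.id L') with hβ''_def
  have hβ'' : Surjective β'' := fun y => ⟨Coprod.inr y, by simp [hβ''_def]⟩
  have hmid : β''.comp (Coprod.map (MonoidHom.id A) βB) = Coprod.lift 1 βB := by
    apply Coprod.hom_ext
    · ext x; simp [hβ''_def]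
    · ext x; simp [hβ''_def]
  have hcomp'' : β''.comp α'' = φ := by
    rw [← hcomp]
    ext l
    calc β'' (Coprod.map (MonoidHom.id A) βB (e (α l)))
        = Coprod.lift 1 βB (e (α l)) := DFunLike.congr_fun hmid _
      _ = β (e.symm (e (α l))) := (DFunLike.congr_fun key _).symm
      _ = β (α l) := by rw [e.symm_apply_apply]
  obtain ⟨q, H, instH, haq, hnt, hfi, hniz, ⟨eL⟩⟩ := h1
  by_cases hA : Nonempty (A ≃* Multiplicative ℤ)
  · -- `A ≅ ℤ` : `A * L'` has Scott complexity `(q, b)`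
    obtain ⟨eA⟩ := hA
    have hnew : HasScott (Coprod A L') ((q : ℤ) + 1 - 1) b := by
      refine ⟨q + 1, H, instH, by push_cast; ring, hnt, hfi, hniz, ⟨?_⟩⟩
      exact (MulEquiv.coprodCongr eA eL).trans <|
        (MulEquiv.coprodCongr (MulEquiv.refl _) (MulEquiv.coprodComm _ _)).trans <|
        (MulEquiv.coprodAssoc _ _ _).symm.trans <|
        (MulEquiv.coprodCongr (zEquiv q) (MulEquiv.refl _)).trans <|
        MulEquiv.coprodComm _ _
    have := hmax (Coprod A L') inferInstance α'' β'' hα'' hβ'' hcomp''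
      ((q : ℤ) + 1 - 1) b a b hnew h2
    rcases this with h | ⟨h, _⟩ <;> omega
  · -- `A` not `ℤ` : `A * L'` has Scott complexity `(a, b + 1)`
    have hAz : IsEmpty (A ≃* Multiplicative ℤ) := not_nonempty_iff.mp hA
    have hnew : HasScott (Coprod A L') a (b + 1) := by
      refine ⟨q, consT A H, inferInstance, haq, ?_, ?_, ?_, ⟨?_⟩⟩
      · exact fun i =>
          Fin.cases (motive := fun i => Nontrivial (consT A H i)) hAnt hnt i
      · exact fun i =>
          Fin.cases (motive := fun i => FreelyIndecomposable (consT A H i)) hAfi hfi i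
      · exact fun i =>
          Fin.cases (motive := fun i => IsEmpty (consT A H i ≃* Multiplicative ℤ)) hAz hniz i
      · exact (MulEquiv.coprodCongr (MulEquiv.refl A) eL).trans <|
          (MulEquiv.coprodAssoc A _ _).symm.trans <|
          MulEquiv.coprodCongr (consEquiv A H) (MulEquiv.refl _)
    have := hmax (Coprod A L') inferInstance α'' β'' hα'' hβ'' hcomp''
      a (b + 1) a b hnew h2
    rcases this with h | ⟨_, h⟩ <;> omega
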